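/- arXiv:2308.03211 — 7 statements merged into one kernel-verified Lean document; each statement's English description precedes it below -/
import Mathlib

section
/- The ℝ[t]-module of triples (f0, f1, f2) ∈ ℝ[t]³ with t² dividing f0 - f1 and (t-1)² dividing f1 - f2 is generated by (1,1,1), (t²,0,0), and (0,0,(t-1)²). -/
open Polynomial

theorem spline_C1_module_generators (f : Polynomial ℝ × Polynomial ℝ × Polynomial ℝ) :
    f ∈ Submodule.span (Polynomial ℝ)
        ({((1 : Polynomial ℝ), (1 : Polynomial ℝ), (1 : Polynomial ℝ)),
          (X ^ 2, 0, 0), (0, 0, (X - 1) ^ 2)} :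
          Set (Polynomial ℝ × Polynomial ℝ × Polynomial ℝ)) ↔
      X ^ 2 ∣ f.1 - f.2.1 ∧ (X - 1) ^ 2 ∣ f.2.1 - f.2.2 := by
  constructor
  · intro hf
    induction hf using Submodule.span_induction with
    | mem x hx =>
      simp only [Set.mem_insert_iff, Set.mem_singleton_iff] at hx
      rcases hx with rfl | rfl | rfl <;> constructor <;> simp
    | zero => simp
    | add x y _ _ hx hy =>
      obtain ⟨h1, h2⟩ := hx
      obtain ⟨h3, h4⟩ := hy
      constructor
      · have := dvd_add h1 h3
        simpa [Prod.fst_add, Prod.snd_add, sub_add_sub_comm] using this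
      · have := dvd_add h2 h4
        simpa [Prod.fst_add, Prod.snd_add, sub_add_sub_comm] using this
    | smul a x _ hx =>
      obtain ⟨h1, h2⟩ := hx
      exact ⟨by simpa [mul_sub] using h1.mul_left a,
             by simpa [mul_sub] using h2.mul_left a⟩
  · rintro ⟨⟨a, ha⟩, ⟨b, hb⟩⟩
    have hf : f = f.2.1 • ((1 : Polynomial ℝ), (1 : Polynomial ℝ), (1 : Polynomial ℝ))
        + a • ((X : Polynomial ℝ) ^ 2, (0 : Polynomial ℝ), (0 : Polynomial ℝ))
        + (-b) • ((0 : Polynomial ℝ), (0 : Polynomial ℝ), ((X : Polynomial ℝ) - 1) ^ 2) := by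
      apply Prod.ext
      · simp only [Prod.fst_add, Prod.smul_fst, smul_eq_mul]
        have : f.1 - f.2.1 = X ^ 2 * a := ha
        ring_nf
        linear_combination this
      · apply Prod.ext
        · simp
        · simp only [Prod.snd_add, Prod.smul_snd, smul_eq_mul]
          have : f.2.1 - f.2.2 = (X - 1) ^ 2 * b := hb
          ring_nf
          linear_combination -this
    rw [hf]
    refine Submodule.add_mem _ (Submodule.add_mem _ ?_ ?_) ?_ <;>
      exact Submodule.smul_mem _ _ (Submodule.subset_span (by simp))
end

section
/- In ℝ[x,y,z], the ideal ⟨x(x-y), xz, z(z-y+1)⟩ equals the intersection of the three ideals ⟨x-y, z⟩, ⟨x, z⟩, and ⟨x, z-y+1⟩. -/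
open MvPolynomial

private lemma sub_aeval_mem_span (v : Fin 3 → MvPolynomial (Fin 3) ℝ)
    (p : MvPolynomial (Fin 3) ℝ) :
    p - (aeval v) p ∈ Ideal.span (Set.range fun i => (X i : MvPolynomial (Fin 3) ℝ) - v i) := by
  induction p using MvPolynomial.induction_on with
  | C a => simp
  | add p q hp hq =>
      have h : p + q - aeval v (p + q) = (p - aeval v p) + (q - aeval v q) := by
        simp only [map_add]; ring
      rw [h]; exact Ideal.add_mem _ hp hq
  | mul_X p i hp =>
      have h : p * X i - aeval v (p * X i)
          = (p - aeval v p) * X i + aeval v p * (X i - v i) := by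
        simp only [map_mul, aeval_X]; ring
      rw [h]
      exact Ideal.add_mem _ (Ideal.mul_mem_right _ _ hp)
        (Ideal.mul_mem_left _ _ (Ideal.subset_span ⟨i, rfl⟩))

theorem spline_scheme_C0_primary_decomposition :
    let x : MvPolynomial (Fin 3) ℝ := X 0
    let y : MvPolynomial (Fin 3) ℝ := X 1
    let z : MvPolynomial (Fin 3) ℝ := X 2
    Ideal.span {x * (x - y), x * z, z * (z - y + 1)} =
      Ideal.span {x - y, z} ⊓ Ideal.span {x, z} ⊓ Ideal.span {x, z - y + 1} := by
  intro x y z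
  have hx : x = X 0 := rfl
  have hy : y = X 1 := rfl
  have hz : z = X 2 := rfl
  apply le_antisymm
  · refine Ideal.span_le.mpr ?_
    intro p hp
    simp only [Set.mem_insert_iff, Set.mem_singleton_iff] at hp
    rcases hp with rfl | rfl | rfl
    · refine Submodule.mem_inf.mpr ⟨Submodule.mem_inf.mpr ⟨?_, ?_⟩, ?_⟩
      · exact Ideal.mul_mem_left _ _ (Ideal.subset_span (by simp))
      · exact Ideal.mul_mem_right _ _ (Ideal.subset_span (by simp))
      · exact Ideal.mul_mem_right _ _ (Ideal.subset_span (by simp))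
    · refine Submodule.mem_inf.mpr ⟨Submodule.mem_inf.mpr ⟨?_, ?_⟩, ?_⟩
      · exact Ideal.mul_mem_left _ _ (Ideal.subset_span (by simp))
      · exact Ideal.mul_mem_right _ _ (Ideal.subset_span (by simp))
      · exact Ideal.mul_mem_right _ _ (Ideal.subset_span (by simp))
    · refine Submodule.mem_inf.mpr ⟨Submodule.mem_inf.mpr ⟨?_, ?_⟩, ?_⟩
      · exact Ideal.mul_mem_right _ _ (Ideal.subset_span (by simp))
      · exact Ideal.mul_mem_right _ _ (Ideal.subset_span (by simp))
      · exact Ideal.mul_mem_left _ _ (Ideal.subset_span (by simp))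
  · intro p hp
    obtain ⟨⟨h1, h2⟩, h3⟩ := Submodule.mem_inf.mp hp |>.imp Submodule.mem_inf.mp id
    -- Step A: p ∈ span {z, x*(x-y)}
    obtain ⟨a, b, hab⟩ := Ideal.mem_span_pair.mp h1
    obtain ⟨c, d, hcd⟩ := Ideal.mem_span_pair.mp h2
    set ρ : MvPolynomial (Fin 3) ℝ →ₐ[ℝ] MvPolynomial (Fin 3) ℝ :=
      aeval ![X 1, X 1, 0] with hρ
    have hρp : ρ p = 0 := by
      rw [← hab]; simp [hρ, hx, hy, hz]
    have hρc : ρ c * y = 0 := by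
      have h : ρ p = ρ c * y := by
        rw [← hcd]; simp [hρ, hx, hy, hz]
      rw [← h, hρp]
    have hc0 : ρ c = 0 := by
      rcases mul_eq_zero.mp hρc with h | h
      · exact h
      · exact absurd (hy ▸ h) (X_ne_zero 1)
    have hcmem : c ∈ Ideal.span {x - y, z} := by
      have h := sub_aeval_mem_span ![X 1, X 1, 0] c
      rw [show (aeval ![X 1, X 1, 0]) c = ρ c from rfl, hc0, sub_zero] at h
      refine Ideal.span_le.mpr ?_ h
      rintro _ ⟨i, rfl⟩
      fin_cases i
      · exact Ideal.subset_span (by simp [hx, hy])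
      · simp
      · simpa using Ideal.subset_span (show z ∈ ({x - y, z} : Set _) by simp)
    obtain ⟨s, t, hst⟩ := Ideal.mem_span_pair.mp hcmem
    have hK : p ∈ Ideal.span {z, x * (x - y)} := by
      have hrep : p = (t * x + d) * z + s * (x * (x - y)) := by
        rw [← hcd, ← hst]; ring
      rw [hrep]
      exact Ideal.add_mem _
        (Ideal.mul_mem_left _ _ (Ideal.subset_span (by simp)))
        (Ideal.mul_mem_left _ _ (Ideal.subset_span (by simp)))
    -- Step B
    obtain ⟨A, B, hAB⟩ := Ideal.mem_span_pair.mp hK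
    obtain ⟨u, w, huw⟩ := Ideal.mem_span_pair.mp h3
    set τ : MvPolynomial (Fin 3) ℝ →ₐ[ℝ] MvPolynomial (Fin 3) ℝ :=
      aeval ![0, X 1, X 1 - 1] with hτ
    have hτp : τ p = 0 := by
      rw [← huw]; simp [hτ, hx, hy, hz]
    have hτA : τ A * (X 1 - 1) = 0 := by
      have h : τ p = τ A * (X 1 - 1) := by
        rw [← hAB]; simp [hτ, hx, hy, hz]
      rw [← h, hτp]
    have hA0 : τ A = 0 := by
      rcases mul_eq_zero.mp hτA with h | h
      · exact h
      · exfalso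
        have h2 := congrArg (eval fun _ => (0 : ℝ)) h
        simp at h2
    have hAmem : A ∈ Ideal.span {x, z - y + 1} := by
      have h := sub_aeval_mem_span ![0, X 1, X 1 - 1] A
      rw [show (aeval ![0, X 1, X 1 - 1]) A = τ A from rfl, hA0, sub_zero] at h
      refine Ideal.span_le.mpr ?_ h
      rintro _ ⟨i, rfl⟩
      fin_cases i
      · simpa [hx] using Ideal.subset_span (show x ∈ ({x, z - y + 1} : Set _) by simp)
      · simp
      · exact Ideal.mem_span_pair.mpr ⟨0, 1, by simp [hx, hy, hz]; ring⟩
    obtain ⟨u2, w2, hA⟩ := Ideal.mem_span_pair.mp hAmem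
    have hrep2 : p = u2 * (x * z) + w2 * (z * (z - y + 1)) + B * (x * (x - y)) := by
      rw [← hAB, ← hA]; ring
    rw [hrep2]
    refine Ideal.add_mem _ (Ideal.add_mem _ ?_ ?_) ?_
    · exact Ideal.mul_mem_left _ _ (Ideal.subset_span (by simp))
    · exact Ideal.mul_mem_left _ _ (Ideal.subset_span (by simp))
    · exact Ideal.mul_mem_left _ _ (Ideal.subset_span (by simp))
end

section
/- In ℝ[x,y,z], the ideal ⟨x(x-y²), xz, z(z-(y-1)²)⟩ equals the intersection of the three ideals ⟨x-y², z⟩, ⟨x, z⟩, and ⟨x, z-(y-1)²⟩. -/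
open MvPolynomial

private lemma aux_sub_aeval_mem (I : Ideal (MvPolynomial (Fin 3) ℝ))
    (g : Fin 3 → MvPolynomial (Fin 3) ℝ) (h : ∀ i, X i - g i ∈ I)
    (p : MvPolynomial (Fin 3) ℝ) : p - aeval g p ∈ I := by
  rw [← Ideal.Quotient.eq_zero_iff_mem, map_sub, sub_eq_zero]
  have key : (Ideal.Quotient.mkₐ ℝ I).comp (aeval g) = Ideal.Quotient.mkₐ ℝ I := by
    apply MvPolynomial.algHom_ext
    intro i
    simp only [AlgHom.comp_apply, aeval_X, Ideal.Quotient.mkₐ_eq_mk]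
    refine Ideal.Quotient.eq.mpr ?_
    have := I.neg_mem (h i)
    rwa [neg_sub] at this
  have := congrArg (fun F => F p) key
  simpa using this.symm

private lemma aux_mem_of_aeval_eq_zero (I : Ideal (MvPolynomial (Fin 3) ℝ))
    (g : Fin 3 → MvPolynomial (Fin 3) ℝ) (h : ∀ i, X i - g i ∈ I)
    (φ : MvPolynomial (Fin 3) ℝ →ₐ[ℝ] Polynomial ℝ)
    (σ : Polynomial ℝ →ₐ[ℝ] MvPolynomial (Fin 3) ℝ)
    (hcomp : ∀ i, σ (φ (X i)) = g i)
    (a : MvPolynomial (Fin 3) ℝ) (ha : φ a = 0) : a ∈ I := by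
  have h1 := aux_sub_aeval_mem I g h a
  have h2 : σ.comp φ = aeval g := by
    apply MvPolynomial.algHom_ext
    intro i
    simpa using hcomp i
  have h3 : aeval g a = σ (φ a) := by
    rw [← h2]; rfl
  rw [ha, map_zero] at h3
  rwa [h3, sub_zero] at h1

theorem spline_scheme_C1_primary_decomposition :
    let x : MvPolynomial (Fin 3) ℝ := X 0
    let y : MvPolynomial (Fin 3) ℝ := X 1
    let z : MvPolynomial (Fin 3) ℝ := X 2
    Ideal.span {x * (x - y ^ 2), x * z, z * (z - (y - 1) ^ 2)} =
      Ideal.span {x - y ^ 2, z} ⊓ Ideal.span {x, z} ⊓ Ideal.span {x, z - (y - 1) ^ 2} := by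
  intro x y z
  apply le_antisymm
  · rw [Ideal.span_le]
    rintro p hp
    simp only [Set.mem_insert_iff, Set.mem_singleton_iff] at hp
    simp only [SetLike.mem_coe, Submodule.mem_inf]
    rcases hp with rfl | rfl | rfl
    · refine ⟨⟨?_, ?_⟩, ?_⟩
      · exact Ideal.mem_span_pair.mpr ⟨x, 0, by ring⟩
      · exact Ideal.mem_span_pair.mpr ⟨x - y ^ 2, 0, by ring⟩
      · exact Ideal.mem_span_pair.mpr ⟨x - y ^ 2, 0, by ring⟩
    · refine ⟨⟨?_, ?_⟩, ?_⟩
      · exact Ideal.mem_span_pair.mpr ⟨0, x, by ring⟩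
      · exact Ideal.mem_span_pair.mpr ⟨z, 0, by ring⟩
      · exact Ideal.mem_span_pair.mpr ⟨z, 0, by ring⟩
    · refine ⟨⟨?_, ?_⟩, ?_⟩
      · exact Ideal.mem_span_pair.mpr ⟨0, z - (y - 1) ^ 2, by ring⟩
      · exact Ideal.mem_span_pair.mpr ⟨0, z - (y - 1) ^ 2, by ring⟩
      · exact Ideal.mem_span_pair.mpr ⟨0, z, by ring⟩
  · rintro f hf
    simp only [Submodule.mem_inf] at hf
    obtain ⟨⟨hf1, hf2⟩, hf3⟩ := hf
    obtain ⟨a, b, hab⟩ := Ideal.mem_span_pair.mp hf2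
    set T : Polynomial ℝ := Polynomial.X
    set φ1 : MvPolynomial (Fin 3) ℝ →ₐ[ℝ] Polynomial ℝ := aeval ![T ^ 2, T, 0]
    set φ3 : MvPolynomial (Fin 3) ℝ →ₐ[ℝ] Polynomial ℝ := aeval ![0, T, (T - 1) ^ 2]
    have hφ1x : φ1 x = T ^ 2 := by simp [φ1, x]
    have hφ1y : φ1 y = T := by simp [φ1, y]
    have hφ1z : φ1 z = 0 := by simp [φ1, z]
    have hφ3x : φ3 x = 0 := by simp [φ3, x]
    have hφ3y : φ3 y = T := by simp [φ3, y]
    have hφ3z : φ3 z = (T - 1) ^ 2 := by simp [φ3, z]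
    -- φ1 kills the first ideal
    have hφ1f : φ1 f = 0 := by
      obtain ⟨u, v, huv⟩ := Ideal.mem_span_pair.mp hf1
      rw [← huv]
      simp [map_add, map_mul, map_sub, map_pow, hφ1x, hφ1y, hφ1z]
    have hφ3f : φ3 f = 0 := by
      obtain ⟨u, v, huv⟩ := Ideal.mem_span_pair.mp hf3
      rw [← huv]
      simp [map_add, map_mul, map_sub, map_pow, hφ3x, hφ3y, hφ3z]
    -- deduce φ1 a = 0
    have ha0 : φ1 a = 0 := by
      have : φ1 a * T ^ 2 = 0 := by
        have := hφ1f
        rw [← hab] at this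
        simpa [map_add, map_mul, hφ1x, hφ1z] using this
      have hT : (T : Polynomial ℝ) ^ 2 ≠ 0 := pow_ne_zero _ Polynomial.X_ne_zero
      exact (mul_eq_zero.mp this).resolve_right hT
    have hb0 : φ3 b = 0 := by
      have : φ3 b * (T - 1) ^ 2 = 0 := by
        have := hφ3f
        rw [← hab] at this
        simpa [map_add, map_mul, hφ3x, hφ3z] using this
      have hT : ((T : Polynomial ℝ) - 1) ^ 2 ≠ 0 := by
        apply pow_ne_zero
        intro hc
        rw [sub_eq_zero] at hc
        have := congrArg Polynomial.natDegree hc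
        simp [T, Polynomial.natDegree_X] at this
      exact (mul_eq_zero.mp this).resolve_right hT
    -- a ∈ ⟨x - y², z⟩
    have haI : a ∈ Ideal.span {x - y ^ 2, z} := by
      refine aux_mem_of_aeval_eq_zero _ ![y ^ 2, y, 0] ?_ φ1 (Polynomial.aeval y) ?_ a ha0
      · intro i
        fin_cases i
        · exact Ideal.mem_span_pair.mpr ⟨1, 0, by simp [x, y]⟩
        · simp [y]
        · exact Ideal.mem_span_pair.mpr ⟨0, 1, by simp [z]⟩
      · intro i
        fin_cases i
        · simp [φ1, T, Polynomial.aeval_X]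
        · simp [φ1, T, Polynomial.aeval_X]
        · simp [φ1, T, Polynomial.aeval_X]
    have hbI : b ∈ Ideal.span {x, z - (y - 1) ^ 2} := by
      refine aux_mem_of_aeval_eq_zero _ ![0, y, (y - 1) ^ 2] ?_ φ3 (Polynomial.aeval y) ?_ b hb0
      · intro i
        fin_cases i
        · exact Ideal.mem_span_pair.mpr ⟨1, 0, by simp [x]⟩
        · simp [y]
        · exact Ideal.mem_span_pair.mpr ⟨0, 1, by simp [y, z]⟩
      · intro i
        fin_cases i
        · simp [φ3, T, Polynomial.aeval_X]
        · simp [φ3, T, Polynomial.aeval_X]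
        · simp [φ3, T, Polynomial.aeval_X]
    obtain ⟨c, d, hcd⟩ := Ideal.mem_span_pair.mp haI
    obtain ⟨e, g, heg⟩ := Ideal.mem_span_pair.mp hbI
    have hfin : f = c * (x * (x - y ^ 2)) + (d + e) * (x * z) + g * (z * (z - (y - 1) ^ 2)) := by
      rw [← hab, ← hcd, ← heg]; ring
    rw [hfin]
    have m1 : x * (x - y ^ 2) ∈ Ideal.span {x * (x - y ^ 2), x * z, z * (z - (y - 1) ^ 2)} :=
      Ideal.subset_span (by simp)
    have m2 : x * z ∈ Ideal.span {x * (x - y ^ 2), x * z, z * (z - (y - 1) ^ 2)} :=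
      Ideal.subset_span (by simp)
    have m3 : z * (z - (y - 1) ^ 2) ∈ Ideal.span {x * (x - y ^ 2), x * z, z * (z - (y - 1) ^ 2)} :=
      Ideal.subset_span (by simp)
    exact Ideal.add_mem _ (Ideal.add_mem _ (Ideal.mul_mem_left _ _ m1) (Ideal.mul_mem_left _ _ m2))
      (Ideal.mul_mem_left _ _ m3)
end

section
/- The ℝ-algebra homomorphism ℝ[x,y,z] → ℝ[t]³ sending x ↦ (t,0,0), y ↦ (t,t,t), z ↦ (0,0,t-1) has image equal to the ring S⁰(Δ) = {(f0,f1,f2) : f0(0)=f1(0), f1(1)=f2(1)} and kernel equal to the ideal ⟨x(x-y), xz, z(z-y+1)⟩, so S⁰(Δ) ≅ ℝ[x,y,z]/⟨x(x-y), xz, z(z-y+1)⟩. -/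
open Polynomial MvPolynomial

namespace SplineAux

noncomputable def T' : Polynomial ℝ × Polynomial ℝ × Polynomial ℝ := (Polynomial.X, 0, 0)
noncomputable def Y' : Polynomial ℝ × Polynomial ℝ × Polynomial ℝ :=
  (Polynomial.X, Polynomial.X, Polynomial.X)
noncomputable def Z' : Polynomial ℝ × Polynomial ℝ × Polynomial ℝ := (0, 0, Polynomial.X - 1)
noncomputable def φ' : MvPolynomial (Fin 3) ℝ →ₐ[ℝ] Polynomial ℝ × Polynomial ℝ × Polynomial ℝ :=
  MvPolynomial.aeval ![T', Y', Z']

noncomputable def I' : Ideal (MvPolynomial (Fin 3) ℝ) :=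
  Ideal.span {(MvPolynomial.X 0 : MvPolynomial (Fin 3) ℝ) * (MvPolynomial.X 0 - MvPolynomial.X 1),
    MvPolynomial.X 0 * MvPolynomial.X 2,
    MvPolynomial.X 2 * (MvPolynomial.X 2 - MvPolynomial.X 1 + 1)}

noncomputable def N (a b c : Polynomial ℝ) : MvPolynomial (Fin 3) ℝ :=
  Polynomial.aeval (MvPolynomial.X 1) a + MvPolynomial.X 0 * Polynomial.aeval (MvPolynomial.X 1) b
    + MvPolynomial.X 2 * Polynomial.aeval (MvPolynomial.X 1) c

@[simp] lemma fst_apply' {A B : Type*} [Semiring A] [Semiring B] [Algebra ℝ A] [Algebra ℝ B]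
    (x : A × B) : AlgHom.fst ℝ A B x = x.1 := rfl
@[simp] lemma snd_apply' {A B : Type*} [Semiring A] [Semiring B] [Algebra ℝ A] [Algebra ℝ B]
    (x : A × B) : AlgHom.snd ℝ A B x = x.2 := rfl

lemma phi_X0 : φ' (MvPolynomial.X 0) = T' := by simp [φ']
lemma phi_X1 : φ' (MvPolynomial.X 1) = Y' := by simp [φ']
lemma phi_X2 : φ' (MvPolynomial.X 2) = Z' := by simp [φ']

lemma aeval_prod (w : Polynomial ℝ × Polynomial ℝ × Polynomial ℝ) (a : Polynomial ℝ) :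
    Polynomial.aeval w a =
      (Polynomial.aeval w.1 a, Polynomial.aeval w.2.1 a, Polynomial.aeval w.2.2 a) := by
  refine Prod.ext ?_ (Prod.ext ?_ ?_)
  · exact (Polynomial.aeval_algHom_apply (AlgHom.fst ℝ _ _) w a).symm
  · exact (Polynomial.aeval_algHom_apply ((AlgHom.fst ℝ _ _).comp (AlgHom.snd ℝ _ _)) w a).symm
  · exact (Polynomial.aeval_algHom_apply ((AlgHom.snd ℝ _ _).comp (AlgHom.snd ℝ _ _)) w a).symm

lemma phi_diag (a : Polynomial ℝ) : φ' (Polynomial.aeval (MvPolynomial.X 1) a) = (a, a, a) := by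
  rw [← Polynomial.aeval_algHom_apply φ' (MvPolynomial.X 1) a, phi_X1, Y', aeval_prod]
  simp [Polynomial.aeval_X_left_apply]

lemma phi_N (a b c : Polynomial ℝ) :
    φ' (N a b c) = (a + Polynomial.X * b, a, a + (Polynomial.X - 1) * c) := by
  simp only [N, map_add, map_mul, phi_X0, phi_X2, phi_diag, T', Z']
  refine Prod.ext ?_ (Prod.ext ?_ ?_) <;> simp

lemma span_mem (u v w : MvPolynomial (Fin 3) ℝ) :
    (MvPolynomial.X 0 * (MvPolynomial.X 0 - MvPolynomial.X 1)) * u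
      + (MvPolynomial.X 0 * MvPolynomial.X 2) * v
      + (MvPolynomial.X 2 * (MvPolynomial.X 2 - MvPolynomial.X 1 + 1)) * w ∈ I' := by
  refine I'.add_mem (I'.add_mem (I'.mul_mem_right _ ?_) (I'.mul_mem_right _ ?_))
    (I'.mul_mem_right _ ?_) <;>
  · apply Ideal.subset_span; simp

lemma normal_form (p : MvPolynomial (Fin 3) ℝ) : ∃ a b c : Polynomial ℝ, p - N a b c ∈ I' := by
  induction p using MvPolynomial.induction_on with
  | C r =>
      refine ⟨Polynomial.C r, 0, 0, ?_⟩
      have : N (Polynomial.C r) 0 0 = MvPolynomial.C r := by simp [N]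
      rw [this, sub_self]; exact I'.zero_mem
  | add p q hp hq =>
      obtain ⟨a, b, c, hp⟩ := hp
      obtain ⟨a', b', c', hq⟩ := hq
      refine ⟨a + a', b + b', c + c', ?_⟩
      have : p + q - N (a + a') (b + b') (c + c') = (p - N a b c) + (q - N a' b' c') := by
        simp [N, map_add]; ring
      rw [this]; exact I'.add_mem hp hq
  | mul_X p n hp =>
      obtain ⟨a, b, c, hp⟩ := hp
      fin_cases n
      · show ∃ a b c : Polynomial ℝ, p * MvPolynomial.X 0 - N a b c ∈ I'
        refine ⟨0, a + Polynomial.X * b, 0, ?_⟩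
        have key : p * MvPolynomial.X 0 - N 0 (a + Polynomial.X * b) 0 =
            (p - N a b c) * MvPolynomial.X 0 +
            ((MvPolynomial.X 0 * (MvPolynomial.X 0 - MvPolynomial.X 1)) *
                Polynomial.aeval (MvPolynomial.X 1) b
              + (MvPolynomial.X 0 * MvPolynomial.X 2) * Polynomial.aeval (MvPolynomial.X 1) c
              + (MvPolynomial.X 2 * (MvPolynomial.X 2 - MvPolynomial.X 1 + 1)) * 0) := by
          simp [N, map_add, map_mul, Polynomial.aeval_X]; ring
        rw [key]; exact I'.add_mem (I'.mul_mem_right _ hp) (span_mem _ _ _)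
      · show ∃ a b c : Polynomial ℝ, p * MvPolynomial.X 1 - N a b c ∈ I'
        refine ⟨a * Polynomial.X, b * Polynomial.X, c * Polynomial.X, ?_⟩
        have key : p * MvPolynomial.X 1 - N (a * Polynomial.X) (b * Polynomial.X)
            (c * Polynomial.X) = (p - N a b c) * MvPolynomial.X 1 := by
          simp [N, map_add, map_mul, Polynomial.aeval_X]; ring
        rw [key]; exact I'.mul_mem_right _ hp
      · show ∃ a b c : Polynomial ℝ, p * MvPolynomial.X 2 - N a b c ∈ I'
        refine ⟨0, 0, a + (Polynomial.X - 1) * c, ?_⟩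
        have key : p * MvPolynomial.X 2 - N 0 0 (a + (Polynomial.X - 1) * c) =
            (p - N a b c) * MvPolynomial.X 2 +
            ((MvPolynomial.X 0 * (MvPolynomial.X 0 - MvPolynomial.X 1)) * 0
              + (MvPolynomial.X 0 * MvPolynomial.X 2) * Polynomial.aeval (MvPolynomial.X 1) b
              + (MvPolynomial.X 2 * (MvPolynomial.X 2 - MvPolynomial.X 1 + 1)) *
                Polynomial.aeval (MvPolynomial.X 1) c) := by
          simp [N, map_add, map_mul, Polynomial.aeval_X]; ring
        rw [key]; exact I'.add_mem (I'.mul_mem_right _ hp) (span_mem _ _ _)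

lemma span_le_ker : I' ≤ RingHom.ker φ'.toRingHom := by
  rw [I', Ideal.span_le]
  rintro g hg
  simp only [Set.mem_insert_iff, Set.mem_singleton_iff] at hg
  rcases hg with rfl | rfl | rfl <;>
  · simp only [SetLike.mem_coe, RingHom.mem_ker, AlgHom.toRingHom_eq_coe, RingHom.coe_coe,
      map_mul, map_sub, map_add, map_one, phi_X0, phi_X1, phi_X2, T', Y', Z']
    refine Prod.ext ?_ (Prod.ext ?_ ?_) <;> simp

lemma ker_eq : RingHom.ker φ'.toRingHom = I' := by
  refine le_antisymm ?_ span_le_ker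
  intro p hp
  obtain ⟨a, b, c, hmem⟩ := normal_form p
  have h0 : φ' (N a b c) = 0 := by
    have h1 : φ' (p - N a b c) = 0 := span_le_ker hmem
    rw [map_sub] at h1
    have hp0 : φ' p = 0 := hp
    rw [hp0] at h1
    linear_combination -h1
  rw [phi_N,
    show (0 : Polynomial ℝ × Polynomial ℝ × Polynomial ℝ) = ((0:Polynomial ℝ), (0:Polynomial ℝ), (0:Polynomial ℝ)) from rfl,
    Prod.mk.injEq, Prod.mk.injEq] at h0
  obtain ⟨h1, h2, h3⟩ := h0
  subst h2
  simp only [zero_add] at h1 h3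
  have hb : b = 0 := by
    rcases mul_eq_zero.mp h1 with h | h
    · exact absurd h Polynomial.X_ne_zero
    · exact h
  have hc : c = 0 := by
    rcases mul_eq_zero.mp h3 with h | h
    · exfalso
      have : (Polynomial.X - 1 : Polynomial ℝ) = Polynomial.X - Polynomial.C 1 := by simp
      rw [this] at h
      exact Polynomial.X_sub_C_ne_zero 1 h
    · exact h
  have : N 0 b c = 0 := by rw [hb, hc]; simp [N]
  have : p = p - N 0 b c := by rw [this, sub_zero]
  rw [this]; exact hmem

lemma pred_mul (f g : Polynomial ℝ × Polynomial ℝ × Polynomial ℝ)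
    (hf : f.1.eval 0 = f.2.1.eval 0 ∧ f.2.1.eval 1 = f.2.2.eval 1)
    (hg : g.1.eval 0 = g.2.1.eval 0 ∧ g.2.1.eval 1 = g.2.2.eval 1) :
    (f * g).1.eval 0 = (f * g).2.1.eval 0 ∧ (f * g).2.1.eval 1 = (f * g).2.2.eval 1 := by
  obtain ⟨f0, f1, f2⟩ := f
  obtain ⟨g0, g1, g2⟩ := g
  simp only [Prod.mk_mul_mk, Polynomial.eval_mul] at *
  exact ⟨by rw [hf.1, hg.1], by rw [hf.2, hg.2]⟩

lemma pred_range (p : MvPolynomial (Fin 3) ℝ) :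
    (φ' p).1.eval 0 = (φ' p).2.1.eval 0 ∧ (φ' p).2.1.eval 1 = (φ' p).2.2.eval 1 := by
  induction p using MvPolynomial.induction_on with
  | C r =>
      have : φ' (MvPolynomial.C r) = (Polynomial.C r, Polynomial.C r, Polynomial.C r) := by
        rw [show (MvPolynomial.C r : MvPolynomial (Fin 3) ℝ) = algebraMap ℝ _ r from rfl,
          AlgHom.commutes]
        rfl
      rw [this]; simp
  | add p q hp hq =>
      rw [map_add]
      simp only [Prod.fst_add, Prod.snd_add, Polynomial.eval_add]
      exact ⟨by rw [hp.1, hq.1], by rw [hp.2, hq.2]⟩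
  | mul_X p n hp =>
      rw [map_mul]
      refine pred_mul _ _ hp ?_
      fin_cases n
      · show (φ' (MvPolynomial.X 0)).1.eval 0 = (φ' (MvPolynomial.X 0)).2.1.eval 0 ∧
          (φ' (MvPolynomial.X 0)).2.1.eval 1 = (φ' (MvPolynomial.X 0)).2.2.eval 1
        rw [phi_X0]; simp [T']
      · show (φ' (MvPolynomial.X 1)).1.eval 0 = (φ' (MvPolynomial.X 1)).2.1.eval 0 ∧
          (φ' (MvPolynomial.X 1)).2.1.eval 1 = (φ' (MvPolynomial.X 1)).2.2.eval 1
        rw [phi_X1]; simp [Y']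
      · show (φ' (MvPolynomial.X 2)).1.eval 0 = (φ' (MvPolynomial.X 2)).2.1.eval 0 ∧
          (φ' (MvPolynomial.X 2)).2.1.eval 1 = (φ' (MvPolynomial.X 2)).2.2.eval 1
        rw [phi_X2]; simp [Z']

lemma range_eq : Set.range φ' =
    {f : Polynomial ℝ × Polynomial ℝ × Polynomial ℝ |
      f.1.eval 0 = f.2.1.eval 0 ∧ f.2.1.eval 1 = f.2.2.eval 1} := by
  ext f
  constructor
  · rintro ⟨p, rfl⟩
    exact pred_range p
  · rintro ⟨h1, h2⟩
    obtain ⟨f0, f1, f2⟩ := f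
    simp only at h1 h2
    have hd1 : Polynomial.X ∣ (f0 - f1) := by
      have : (Polynomial.X - Polynomial.C 0 : Polynomial ℝ) ∣ (f0 - f1) := by
        rw [Polynomial.dvd_iff_isRoot]
        simp [Polynomial.IsRoot, h1]
      simpa using this
    have hd2 : (Polynomial.X - Polynomial.C 1) ∣ (f2 - f1) := by
      rw [Polynomial.dvd_iff_isRoot]
      simp [Polynomial.IsRoot, h2]
    obtain ⟨g, hg⟩ := hd1
    obtain ⟨h, hh⟩ := hd2
    refine ⟨N f1 g h, ?_⟩
    rw [phi_N]
    refine Prod.ext ?_ (Prod.ext ?_ ?_)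
    · show f1 + Polynomial.X * g = f0
      linear_combination -hg
    · rfl
    · show f1 + (Polynomial.X - 1) * h = f2
      have e1 : (Polynomial.X - 1 : Polynomial ℝ) = Polynomial.X - Polynomial.C 1 := by simp
      rw [e1]; linear_combination -hh

end SplineAux

theorem spline_C0_presentation :
    let T : Polynomial ℝ × Polynomial ℝ × Polynomial ℝ := (Polynomial.X, 0, 0)
    let Y : Polynomial ℝ × Polynomial ℝ × Polynomial ℝ :=
      (Polynomial.X, Polynomial.X, Polynomial.X)
    let Z : Polynomial ℝ × Polynomial ℝ × Polynomial ℝ := (0, 0, Polynomial.X - 1)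
    let φ : MvPolynomial (Fin 3) ℝ →ₐ[ℝ] Polynomial ℝ × Polynomial ℝ × Polynomial ℝ :=
      MvPolynomial.aeval ![T, Y, Z]
    Set.range φ = {f | f.1.eval 0 = f.2.1.eval 0 ∧ f.2.1.eval 1 = f.2.2.eval 1} ∧
    RingHom.ker φ.toRingHom =
      Ideal.span {(MvPolynomial.X 0 : MvPolynomial (Fin 3) ℝ) *
          (MvPolynomial.X 0 - MvPolynomial.X 1),
        MvPolynomial.X 0 * MvPolynomial.X 2,
        MvPolynomial.X 2 * (MvPolynomial.X 2 - MvPolynomial.X 1 + 1)} := by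
  intro T Y Z φ
  exact ⟨SplineAux.range_eq, SplineAux.ker_eq⟩
end

section
/- The ℝ-algebra homomorphism ℝ[x,y,z] → ℝ[t]³ sending x ↦ (t²,0,0), y ↦ (t,t,t), z ↦ (0,0,(t-1)²) has kernel ⟨x(x-y²), xz, z(z-(y-1)²)⟩ and image the ring S¹(Δ) of triples (f0,f1,f2) with t² | f0-f1 and (t-1)² | f1-f2. -/
open Polynomial MvPolynomial

noncomputable section SplineAux

abbrev R3 := Polynomial ℝ × Polynomial ℝ × Polynomial ℝ

def φ' : MvPolynomial (Fin 3) ℝ →ₐ[ℝ] R3 :=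
  MvPolynomial.aeval ![((Polynomial.X ^ 2, 0, 0) : R3),
    ((Polynomial.X, Polynomial.X, Polynomial.X) : R3),
    ((0, 0, (Polynomial.X - 1) ^ 2) : R3)]

def I' : Ideal (MvPolynomial (Fin 3) ℝ) :=
  Ideal.span {(MvPolynomial.X 0 : MvPolynomial (Fin 3) ℝ) *
      (MvPolynomial.X 0 - MvPolynomial.X 1 ^ 2),
    MvPolynomial.X 0 * MvPolynomial.X 2,
    MvPolynomial.X 2 * (MvPolynomial.X 2 - (MvPolynomial.X 1 - 1) ^ 2)}

def η (g a c : Polynomial ℝ) : MvPolynomial (Fin 3) ℝ :=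
  Polynomial.aeval (MvPolynomial.X 1) g
    + MvPolynomial.X 0 * Polynomial.aeval (MvPolynomial.X 1) a
    + MvPolynomial.X 2 * Polynomial.aeval (MvPolynomial.X 1) c

lemma aeval_pair {A B : Type*} [CommRing A] [CommRing B] [Algebra ℝ A] [Algebra ℝ B]
    (x : A) (y : B) (p : Polynomial ℝ) :
    Polynomial.aeval ((x, y) : A × B) p = (Polynomial.aeval x p, Polynomial.aeval y p) := by
  refine Prod.ext ?_ ?_
  · exact (Polynomial.aeval_algHom_apply (AlgHom.fst ℝ A B) (x, y) p).symm
  · exact (Polynomial.aeval_algHom_apply (AlgHom.snd ℝ A B) (x, y) p).symm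

lemma φ'_X0 : φ' (MvPolynomial.X 0) = ((Polynomial.X ^ 2, 0, 0) : R3) := by
  simp [φ']

lemma φ'_X1 : φ' (MvPolynomial.X 1) = ((Polynomial.X, Polynomial.X, Polynomial.X) : R3) := by
  simp [φ']

lemma φ'_X2 : φ' (MvPolynomial.X 2) = ((0, 0, (Polynomial.X - 1) ^ 2) : R3) := by
  simp [φ']

lemma φ'_poly (g : Polynomial ℝ) :
    φ' (Polynomial.aeval (MvPolynomial.X 1) g) = ((g, g, g) : R3) := by
  rw [← Polynomial.aeval_algHom_apply φ' (MvPolynomial.X 1) g, φ'_X1]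
  rw [aeval_pair, aeval_pair]
  simp [Polynomial.aeval_X_left_apply]

lemma φ'η (g a c : Polynomial ℝ) :
    φ' (η g a c)
      = ((g + Polynomial.X ^ 2 * a, g, g + (Polynomial.X - 1) ^ 2 * c) : R3) := by
  simp only [η, map_add, map_mul, φ'_X0, φ'_X2, φ'_poly]
  refine Prod.ext ?_ (Prod.ext ?_ ?_) <;>
    simp [Prod.mk_mul_mk, Prod.mk_add_mk]

lemma gen1_mem : (MvPolynomial.X 0 : MvPolynomial (Fin 3) ℝ) *
    (MvPolynomial.X 0 - MvPolynomial.X 1 ^ 2) ∈ I' := Ideal.subset_span (by simp)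

lemma gen2_mem : (MvPolynomial.X 0 : MvPolynomial (Fin 3) ℝ) * MvPolynomial.X 2 ∈ I' :=
  Ideal.subset_span (by simp)

lemma gen3_mem : (MvPolynomial.X 2 : MvPolynomial (Fin 3) ℝ) *
    (MvPolynomial.X 2 - (MvPolynomial.X 1 - 1) ^ 2) ∈ I' := Ideal.subset_span (by simp)

lemma normal_form (p : MvPolynomial (Fin 3) ℝ) :
    ∃ g a c : Polynomial ℝ, p - η g a c ∈ I' := by
  induction p using MvPolynomial.induction_on with
  | C r =>
      refine ⟨Polynomial.C r, 0, 0, ?_⟩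
      simp [η, Polynomial.aeval_C]
  | add p q hp hq =>
      obtain ⟨g, a, c, hp⟩ := hp
      obtain ⟨g', a', c', hq⟩ := hq
      refine ⟨g + g', a + a', c + c', ?_⟩
      have := Ideal.add_mem _ hp hq
      convert this using 1
      simp only [η, map_add]
      ring
  | mul_X p i hp =>
      obtain ⟨g, a, c, hp⟩ := hp
      fin_cases i
      · refine ⟨0, g + Polynomial.X ^ 2 * a, 0, ?_⟩
        have key : p * MvPolynomial.X 0 - η 0 (g + Polynomial.X ^ 2 * a) 0
            = (p - η g a c) * MvPolynomial.X 0
              + ((MvPolynomial.X 0 * (MvPolynomial.X 0 - MvPolynomial.X 1 ^ 2))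
                  * Polynomial.aeval (MvPolynomial.X 1) a
                + (MvPolynomial.X 0 * MvPolynomial.X 2)
                  * Polynomial.aeval (MvPolynomial.X 1) c) := by
          simp only [η, map_add, map_mul, map_zero, map_pow, Polynomial.aeval_X]
          ring
        show p * MvPolynomial.X 0 - η 0 (g + Polynomial.X ^ 2 * a) 0 ∈ I'
        rw [key]
        exact Ideal.add_mem _ (Ideal.mul_mem_right _ _ hp)
          (Ideal.add_mem _ (Ideal.mul_mem_right _ _ gen1_mem)
            (Ideal.mul_mem_right _ _ gen2_mem))
      · refine ⟨Polynomial.X * g, Polynomial.X * a, Polynomial.X * c, ?_⟩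
        have key : p * MvPolynomial.X 1
            - η (Polynomial.X * g) (Polynomial.X * a) (Polynomial.X * c)
            = (p - η g a c) * MvPolynomial.X 1 := by
          simp only [η, map_add, map_mul, Polynomial.aeval_X]
          ring
        show p * MvPolynomial.X 1
            - η (Polynomial.X * g) (Polynomial.X * a) (Polynomial.X * c) ∈ I'
        rw [key]
        exact Ideal.mul_mem_right _ _ hp
      · refine ⟨0, 0, g + (Polynomial.X - 1) ^ 2 * c, ?_⟩
        have key : p * MvPolynomial.X 2 - η 0 0 (g + (Polynomial.X - 1) ^ 2 * c)
            = (p - η g a c) * MvPolynomial.X 2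
              + ((MvPolynomial.X 0 * MvPolynomial.X 2)
                  * Polynomial.aeval (MvPolynomial.X 1) a
                + (MvPolynomial.X 2 * (MvPolynomial.X 2 - (MvPolynomial.X 1 - 1) ^ 2))
                  * Polynomial.aeval (MvPolynomial.X 1) c) := by
          simp only [η, map_add, map_mul, map_zero, map_pow, map_sub, map_one,
            Polynomial.aeval_X]
          ring
        show p * MvPolynomial.X 2 - η 0 0 (g + (Polynomial.X - 1) ^ 2 * c) ∈ I'
        rw [key]
        exact Ideal.add_mem _ (Ideal.mul_mem_right _ _ hp)
          (Ideal.add_mem _ (Ideal.mul_mem_right _ _ gen2_mem)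
            (Ideal.mul_mem_right _ _ gen3_mem))

lemma I'_le_ker : I' ≤ RingHom.ker φ'.toRingHom := by
  rw [I', Ideal.span_le]
  rintro x (rfl | rfl | rfl) <;>
    · simp only [SetLike.mem_coe, RingHom.mem_ker, AlgHom.toRingHom_eq_coe,
        RingHom.coe_coe, map_mul, map_sub, map_pow, map_one, φ'_X0, φ'_X1, φ'_X2]
      refine Prod.ext ?_ (Prod.ext ?_ ?_) <;> simp

lemma φ'_of_I' {p : MvPolynomial (Fin 3) ℝ} (hp : p ∈ I') : φ' p = 0 :=
  I'_le_ker hp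

end SplineAux

theorem spline_C1_presentation :
    let T : Polynomial ℝ × Polynomial ℝ × Polynomial ℝ := (Polynomial.X ^ 2, 0, 0)
    let Y : Polynomial ℝ × Polynomial ℝ × Polynomial ℝ :=
      (Polynomial.X, Polynomial.X, Polynomial.X)
    let Z : Polynomial ℝ × Polynomial ℝ × Polynomial ℝ := (0, 0, (Polynomial.X - 1) ^ 2)
    let φ : MvPolynomial (Fin 3) ℝ →ₐ[ℝ] Polynomial ℝ × Polynomial ℝ × Polynomial ℝ :=
      MvPolynomial.aeval ![T, Y, Z]
    Set.range φ =
      {f | Polynomial.X ^ 2 ∣ f.1 - f.2.1 ∧ (Polynomial.X - 1) ^ 2 ∣ f.2.1 - f.2.2} ∧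
    RingHom.ker φ.toRingHom =
      Ideal.span {(MvPolynomial.X 0 : MvPolynomial (Fin 3) ℝ) *
          (MvPolynomial.X 0 - MvPolynomial.X 1 ^ 2),
        MvPolynomial.X 0 * MvPolynomial.X 2,
        MvPolynomial.X 2 * (MvPolynomial.X 2 - (MvPolynomial.X 1 - 1) ^ 2)} := by
  intro T Y Z φ
  have hφ : φ = φ' := rfl
  constructor
  · rw [hφ]
    ext f
    constructor
    · rintro ⟨p, rfl⟩
      obtain ⟨g, a, c, hp⟩ := normal_form p
      have : φ' p = φ' (η g a c) := by
        have h0 : φ' (p - η g a c) = 0 := φ'_of_I' hp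
        rw [map_sub, sub_eq_zero] at h0
        exact h0
      rw [this, φ'η]
      refine ⟨⟨a, by ring⟩, ⟨-c, by ring⟩⟩
    · rintro ⟨⟨a, ha⟩, ⟨c, hc⟩⟩
      refine ⟨η f.2.1 a (-c), ?_⟩
      rw [φ'η]
      refine Prod.ext ?_ (Prod.ext rfl ?_)
      · linear_combination -ha
      · linear_combination hc
  · rw [hφ]
    apply le_antisymm
    · intro p hp
      rw [RingHom.mem_ker] at hp
      have hp' : φ' p = 0 := hp
      obtain ⟨g, a, c, hmem⟩ := normal_form p
      have h0 : φ' (η g a c) = 0 := by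
        have := φ'_of_I' hmem
        rw [map_sub, hp', zero_sub, neg_eq_zero] at this
        exact this
      rw [φ'η, Prod.ext_iff, Prod.ext_iff] at h0
      obtain ⟨h1, h2, h3⟩ := h0
      simp only at h1 h2 h3
      have hg : g = 0 := h2
      subst hg
      have ha : a = 0 := by
        have := h1
        simp only [zero_add] at this
        rcases mul_eq_zero.mp this with h | h
        · exact absurd h (pow_ne_zero _ Polynomial.X_ne_zero)
        · exact h
      have hc : c = 0 := by
        have := h3
        simp only [zero_add] at this
        rcases mul_eq_zero.mp this with h | h
        · refine absurd h (pow_ne_zero _ ?_)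
          simpa using Polynomial.X_sub_C_ne_zero (1 : ℝ)
        · exact h
      subst ha; subst hc
      have : η 0 0 0 = 0 := by simp [η]
      rw [this, sub_zero] at hmem
      exact hmem
    · exact I'_le_ker
end

section
/- Let f0, f1, f2 ∈ ℝ[x,y] satisfy f0 - f1 ∈ ⟨y⟩, f0 - f2 ∈ ⟨x⟩, and f1 - f2 ∈ ⟨x - y⟩. Then x·y·(x-y) divides (x-y)·f0 - x·f1 + y·f2; equivalently, f0/(xy) + f1/(-y(x-y)) + f2/(-x(y-x)) is a polynomial. -/
open MvPolynomial

noncomputable def subEquiv : MvPolynomial (Fin 2) ℝ ≃ₐ[ℝ] MvPolynomial (Fin 2) ℝ :=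
  AlgEquiv.ofAlgHom (aeval ![X 0 - X 1, X 1]) (aeval ![X 0 + X 1, X 1])
    (by ext i; fin_cases i <;> simp)
    (by ext i; fin_cases i <;> simp)

lemma prime_x_sub_y : Prime (X 0 - X 1 : MvPolynomial (Fin 2) ℝ) := by
  have hX : Prime (X 0 : MvPolynomial (Fin 2) ℝ) := by
    rw [← MulEquiv.prime_iff (MvPolynomial.finSuccEquiv ℝ 1).toMulEquiv]
    simpa [MvPolynomial.finSuccEquiv_X_zero] using
      (Polynomial.prime_X : Prime (Polynomial.X : Polynomial (MvPolynomial (Fin 1) ℝ)))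
  have := (MulEquiv.prime_iff subEquiv.toMulEquiv (p := (X 0 : MvPolynomial (Fin 2) ℝ))).mpr hX
  simpa [subEquiv] using this

theorem pushforward_P2_well_defined
    (f0 f1 f2 : MvPolynomial (Fin 2) ℝ) :
    let x : MvPolynomial (Fin 2) ℝ := X 0
    let y : MvPolynomial (Fin 2) ℝ := X 1
    f0 - f1 ∈ Ideal.span {y} →
    f0 - f2 ∈ Ideal.span {x} →
    f1 - f2 ∈ Ideal.span {x - y} →
    x * y * (x - y) ∣ (x - y) * f0 - x * f1 + y * f2 := by
  intro x y h01 h02 h12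
  rw [Ideal.mem_span_singleton] at h01 h02 h12
  obtain ⟨a, hA⟩ := h01
  obtain ⟨b, hB⟩ := h02
  obtain ⟨c, hC⟩ := h12
  have key : x * (a - b) = (x - y) * (a - c) := by
    linear_combination -hA + hB - hC
  have hnd : ¬ ((x - y) ∣ x) := by
    rintro ⟨g, hg⟩
    have := congrArg (MvPolynomial.eval (fun _ => (1 : ℝ))) hg
    simp [x, y] at this
  have hdvd : (x - y) ∣ (a - b) := by
    rcases (prime_x_sub_y.dvd_or_dvd ⟨a - c, key⟩) with h | h
    · exact absurd h hnd
    · exact h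
  obtain ⟨e, he⟩ := hdvd
  refine ⟨e, ?_⟩
  linear_combination x * hA - y * hB + x * y * he
end

section
/- Let X be a finite set with |X| = N, covered by subsets X₁,…,Xₘ, and Pd a finite-dimensional space of functions such that each Xᵢ is an interpolation set for Pd (restriction Pd → ℝ^{Xᵢ} is a linear isomorphism). Then the space of overlap splines S = {(p₁,…,pₘ) ∈ Pdᵐ : pᵢ|_{Xᵢ∩Xⱼ} = pⱼ|_{Xᵢ∩Xⱼ} for all i,j} has dimension exactly N. -/
theorem overlap_spline_dim_interpolation {α : Type*} (m : ℕ) (Xpts : Finset α)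
    (Xi : Fin m → Finset α) (hsub : ∀ i, Xi i ⊆ Xpts)
    (hcover : ∀ x ∈ Xpts, ∃ i, x ∈ Xi i)
    (Pd : Submodule ℝ (α → ℝ)) (hfd : FiniteDimensional ℝ Pd)
    (hinterp : ∀ i, Function.Bijective
      (fun (p : Pd) => fun (x : (Xi i : Finset α)) => (p : α → ℝ) x))
    (S : Submodule ℝ (Fin m → (α → ℝ)))
    (hS : (S : Set (Fin m → (α → ℝ))) =
      {p | (∀ i, p i ∈ Pd) ∧
        ∀ i j, ∀ x, x ∈ Xi i → x ∈ Xi j → p i x = p j x}) :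
    Module.finrank ℝ S = Xpts.card := by
  have hmem : ∀ p : Fin m → (α → ℝ), p ∈ S ↔ (∀ i, p i ∈ Pd) ∧
      ∀ i j, ∀ x, x ∈ Xi i → x ∈ Xi j → p i x = p j x := by
    intro p
    constructor
    · intro hp; have := hS ▸ (show p ∈ (S : Set _) from hp); exact this
    · intro hp; have : p ∈ (S : Set _) := hS ▸ hp; exact this
  -- choice of cover index
  have hchoose : ∀ x : {y // y ∈ Xpts}, ∃ i, (x : α) ∈ Xi i :=
    fun x => hcover x x.2
  let idx : {y // y ∈ Xpts} → Fin m := fun x => (hchoose x).choose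
  have hidx : ∀ x : {y // y ∈ Xpts}, (x : α) ∈ Xi (idx x) :=
    fun x => (hchoose x).choose_spec
  -- the evaluation map
  let Φ : S →ₗ[ℝ] ({y // y ∈ Xpts} → ℝ) :=
    { toFun := fun p => fun x => (p : Fin m → α → ℝ) (idx x) x
      map_add' := fun p q => rfl
      map_smul' := fun c p => rfl }
  have hinj : Function.Injective Φ := by
    intro p q hpq
    ext i x
    by_cases hx : x ∈ Xi i
    · have hxX : x ∈ Xpts := hsub i hx
      have h1 := congrFun hpq ⟨x, hxX⟩
      have hp := ((hmem _).mp p.2).2 i (idx ⟨x, hxX⟩) x hx (hidx ⟨x, hxX⟩)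
      have hq := ((hmem _).mp q.2).2 i (idx ⟨x, hxX⟩) x hx (hidx ⟨x, hxX⟩)
      simp only [Φ] at h1
      rw [hp, hq]; exact h1
    · -- p i and q i both in Pd; determined by values on Xi i
      have hp := ((hmem _).mp p.2).1 i
      have hq := ((hmem _).mp q.2).1 i
      have : (⟨(p : Fin m → α → ℝ) i, hp⟩ : Pd) = ⟨(q : Fin m → α → ℝ) i, hq⟩ := by
        apply (hinterp i).1
        funext y
        have hyX : (y : α) ∈ Xpts := hsub i y.2
        have h1 := congrFun hpq ⟨y, hyX⟩
        have hp' := ((hmem _).mp p.2).2 i (idx ⟨y, hyX⟩) y y.2 (hidx ⟨y, hyX⟩)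
        have hq' := ((hmem _).mp q.2).2 i (idx ⟨y, hyX⟩) y y.2 (hidx ⟨y, hyX⟩)
        simp only [Φ] at h1
        simpa [hp', hq'] using h1
      exact congrFun (congrArg Subtype.val this) x
  have hsurj : Function.Surjective Φ := by
    intro f
    -- for each i, interpolate f on Xi i
    have hq : ∀ i, ∃ q : Pd, ∀ x : {y // y ∈ Xi i}, (q : α → ℝ) x = f ⟨x, hsub i x.2⟩ := by
      intro i
      obtain ⟨q, hq⟩ := (hinterp i).2 (fun x => f ⟨x, hsub i x.2⟩)
      exact ⟨q, fun x => congrFun hq x⟩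
    choose q hq using hq
    set p : Fin m → α → ℝ := fun i => (q i : α → ℝ) with hpdef
    have hpS : p ∈ S := by
      rw [hmem]
      refine ⟨fun i => (q i).2, fun i j x hxi hxj => ?_⟩
      have h1 := hq i ⟨x, hxi⟩
      have h2 := hq j ⟨x, hxj⟩
      simp only [hpdef]
      rw [h1, h2]
    refine ⟨⟨p, hpS⟩, ?_⟩
    funext x
    simp only [Φ, LinearMap.coe_mk, AddHom.coe_mk]
    exact hq (idx x) ⟨x, hidx x⟩
  let e : S ≃ₗ[ℝ] ({y // y ∈ Xpts} → ℝ) :=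
    LinearEquiv.ofBijective Φ ⟨hinj, hsurj⟩
  rw [e.finrank_eq]
  simp [Module.finrank_fintype_fun_eq_card]
end
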